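/- Let (X,d,W) be a uniformly convex W-hyperbolic space with a monotone modulus of uniform convexity η. Assume r > 0, ε ∈ (0,2] and a,x,y ∈ X satisfy d(x,a) ≤ r, d(y,a) ≤ r and d(x,y) ≥ εr. Then for every λ ∈ [0,1] and every s ≥ r, d((1−λ)x ⊕ λy, a) ≤ (1 − 2λ(1−λ)η(s,ε))·r. -/

import Mathlib

open Set Filter Metric Bornology Function

/-- A `W`-hyperbolic space structure on a metric space `X` (Kohlenbach).
`W x y l` denotes `(1-l)x ⊕ l y`. -/
structure WHyp (X : Type*) [MetricSpace X] where
  W : X → X → ℝ → X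
  W1 : ∀ (x y z : X), ∀ l ∈ Set.Icc (0:ℝ) 1,
    dist z (W x y l) ≤ (1 - l) * dist z x + l * dist z y
  W2 : ∀ (x y : X), ∀ l ∈ Set.Icc (0:ℝ) 1, ∀ l' ∈ Set.Icc (0:ℝ) 1,
    dist (W x y l) (W x y l') = |l - l'| * dist x y
  W3 : ∀ (x y : X), ∀ l ∈ Set.Icc (0:ℝ) 1, W x y l = W y x (1 - l)
  W4 : ∀ (x y z w : X), ∀ l ∈ Set.Icc (0:ℝ) 1,
    dist (W x z l) (W y w l) ≤ (1 - l) * dist x y + l * dist z w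

/-- `η` is a modulus of uniform convexity for the `W`-hyperbolic space `H`. -/
def WHyp.UnifConvex {X : Type*} [MetricSpace X] (H : WHyp X) (η : ℝ → ℝ → ℝ) : Prop :=
  (∀ r ε : ℝ, 0 < r → ε ∈ Set.Ioc (0:ℝ) 2 → η r ε ∈ Set.Ioc (0:ℝ) 1) ∧
  (∀ (r ε : ℝ) (a x y : X), 0 < r → ε ∈ Set.Ioc (0:ℝ) 2 →
    dist x a ≤ r → dist y a ≤ r → ε * r ≤ dist x y →
    dist (H.W x y (1/2)) a ≤ (1 - η r ε) * r)

/-- A modulus of uniform convexity is monotone if it decreases in `r` for fixed `ε`. -/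
def MonotoneModulus (η : ℝ → ℝ → ℝ) : Prop :=
  ∀ r s ε : ℝ, 0 < r → r ≤ s → ε ∈ Set.Ioc (0:ℝ) 2 → η s ε ≤ η r ε

namespace WHyp

variable {X : Type*} [MetricSpace X] (H : WHyp X)

lemma W_zero (x y : X) : H.W x y 0 = x := by
  have h := H.W1 x y x 0 ⟨le_refl 0, zero_le_one⟩
  simp at h
  exact h.symm

lemma W_one (x y : X) : H.W x y 1 = y := by
  have h := H.W1 x y y 1 ⟨zero_le_one, le_refl 1⟩
  simp at h
  exact h.symm

lemma dist_W_left (x y : X) {l : ℝ} (hl : l ∈ Set.Icc (0:ℝ) 1) :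
    dist x (H.W x y l) = l * dist x y := by
  have h := H.W2 x y l hl 0 ⟨le_refl 0, zero_le_one⟩
  rw [H.W_zero x y] at h
  rw [dist_comm, h, sub_zero, abs_of_nonneg hl.1]

lemma dist_W_right (x y : X) {l : ℝ} (hl : l ∈ Set.Icc (0:ℝ) 1) :
    dist y (H.W x y l) = (1 - l) * dist x y := by
  have h := H.W2 x y l hl 1 ⟨zero_le_one, le_refl 1⟩
  rw [H.W_one x y] at h
  rw [dist_comm, h, abs_of_nonpos (by linarith [hl.2])]
  ring_nf

/-- Uniqueness of points at prescribed distances on a "geodesic" between `x` and `y`,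
in a uniformly convex space. -/
lemma unique_point {η : ℝ → ℝ → ℝ} (hU : H.UnifConvex η) {x y p q : X} {t : ℝ}
    (hD : 0 < dist x y) (ht0 : 0 < t) (ht1 : t < 1)
    (hxp : dist x p = t * dist x y) (hyp2 : dist y p = (1 - t) * dist x y)
    (hxq : dist x q = t * dist x y) (hyq : dist y q = (1 - t) * dist x y) : p = q := by
  by_contra hne
  have hδ : 0 < dist p q := dist_pos.mpr hne
  set D := dist x y with hDdef
  -- around x
  have hr1 : 0 < t * D := mul_pos ht0 hD
  set ε1 : ℝ := min (dist p q / (t * D)) 2 with hε1def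
  have hε1 : ε1 ∈ Set.Ioc (0:ℝ) 2 :=
    ⟨lt_min (div_pos hδ hr1) two_pos, min_le_right _ _⟩
  have h1 := hU.2 (t * D) ε1 x p q hr1 hε1 (by rw [dist_comm]; exact hxp.le)
    (by rw [dist_comm]; exact hxq.le)
    (by
      calc ε1 * (t * D) ≤ (dist p q / (t * D)) * (t * D) := by
            apply mul_le_mul_of_nonneg_right (min_le_left _ _) hr1.le
        _ = dist p q := by field_simp)
  have hη1 : 0 < η (t * D) ε1 := (hU.1 (t * D) ε1 hr1 hε1).1
  have h1' : dist (H.W p q (1/2)) x < t * D := by nlinarith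
  -- around y
  have hr2 : 0 < (1 - t) * D := mul_pos (by linarith) hD
  set ε2 : ℝ := min (dist p q / ((1 - t) * D)) 2 with hε2def
  have hε2 : ε2 ∈ Set.Ioc (0:ℝ) 2 :=
    ⟨lt_min (div_pos hδ hr2) two_pos, min_le_right _ _⟩
  have h2 := hU.2 ((1 - t) * D) ε2 y p q hr2 hε2 (by rw [dist_comm]; exact hyp2.le)
    (by rw [dist_comm]; exact hyq.le)
    (by
      calc ε2 * ((1 - t) * D) ≤ (dist p q / ((1 - t) * D)) * ((1 - t) * D) := by
            apply mul_le_mul_of_nonneg_right (min_le_left _ _) hr2.le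
        _ = dist p q := div_mul_cancel₀ _ hr2.ne')
  have hη2 : 0 < η ((1 - t) * D) ε2 := (hU.1 ((1 - t) * D) ε2 hr2 hε2).1
  have h2' : dist (H.W p q (1/2)) y < (1 - t) * D := by nlinarith
  have htri : D ≤ dist x (H.W p q (1/2)) + dist (H.W p q (1/2)) y := dist_triangle _ _ _
  rw [dist_comm x] at htri
  linarith

lemma aux {η : ℝ → ℝ → ℝ} (hU : H.UnifConvex η) (hmon : MonotoneModulus η)
    (r ε : ℝ) (a x y : X)
    (hr : 0 < r) (hε : ε ∈ Set.Ioc (0:ℝ) 2)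
    (hxa : dist x a ≤ r) (hya : dist y a ≤ r) (hxy : ε * r ≤ dist x y) :
    ∀ l ∈ Set.Icc (0:ℝ) (1/2), ∀ s : ℝ, r ≤ s →
      dist (H.W x y l) a ≤ (1 - 2 * l * (1 - l) * η s ε) * r := by
  intro l hl s hs
  have hs0 : 0 < s := lt_of_lt_of_le hr hs
  have hηs : η s ε ∈ Set.Ioc (0:ℝ) 1 := hU.1 s ε hs0 hε
  have hηrs : η s ε ≤ η r ε := hmon r s ε hr hs hε
  have hD : 0 < dist x y := lt_of_lt_of_le (mul_pos hε.1 hr) hxy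
  rcases eq_or_lt_of_le hl.1 with h0 | h0
  · rw [← h0, H.W_zero x y]
    nlinarith
  -- 0 < l ≤ 1/2
  have hl1 : l ∈ Set.Icc (0:ℝ) 1 := ⟨hl.1, by linarith [hl.2]⟩
  have h2l : 2 * l ∈ Set.Icc (0:ℝ) 1 := ⟨by linarith, by linarith [hl.2]⟩
  have hhalf : (1/2 : ℝ) ∈ Set.Icc (0:ℝ) 1 := by norm_num
  set m := H.W x y (1/2) with hm
  have hxm : dist x m = (1/2) * dist x y := H.dist_W_left x y hhalf
  have hym : dist y m = (1/2) * dist x y := by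
    have := H.dist_W_right x y hhalf; rw [this]; norm_num
  set p := H.W x m (2 * l) with hp
  have hxp : dist x p = l * dist x y := by
    rw [H.dist_W_left x m h2l, hxm]; ring
  have hmp : dist m p = (1 - 2 * l) * dist x m := H.dist_W_right x m h2l
  have hyp_le : dist y p ≤ (1 - l) * dist x y := by
    calc dist y p ≤ dist y m + dist m p := dist_triangle _ _ _
      _ = (1 - l) * dist x y := by rw [hym, hmp, hxm]; ring
  have hyp_ge : (1 - l) * dist x y ≤ dist y p := by
    have := dist_triangle x p y
    rw [hxp, dist_comm p y] at this
    linarith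
  have hyp' : dist y p = (1 - l) * dist x y := le_antisymm hyp_le hyp_ge
  have hxq : dist x (H.W x y l) = l * dist x y := H.dist_W_left x y hl1
  have hyq : dist y (H.W x y l) = (1 - l) * dist x y := H.dist_W_right x y hl1
  have hkey : p = H.W x y l :=
    H.unique_point hU hD h0 (by linarith [hl.2]) hxp hyp' hxq hyq
  rw [← hkey, hp]
  have hma : dist m a ≤ (1 - η r ε) * r := hU.2 r ε a x y hr hε hxa hya hxy
  have hW1 := H.W1 x m a (2 * l) h2l
  rw [dist_comm a x, dist_comm a m] at hW1
  rw [dist_comm]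
  have hηr1 : 0 < η r ε := lt_of_lt_of_le hηs.1 hηrs
  have hb1 : (1 - 2*l) * dist x a ≤ (1 - 2*l) * r :=
    mul_le_mul_of_nonneg_left hxa (by linarith [hl.2])
  have hb2 : 2*l * dist m a ≤ 2*l * ((1 - η r ε) * r) :=
    mul_le_mul_of_nonneg_left hma (by linarith)
  have hb3 : 2*l*(1-l)*η s ε*r ≤ 2*l*(η r ε)*r := by
    nlinarith [mul_nonneg h0.le hηs.1.le, mul_nonneg (mul_nonneg h0.le hηs.1.le) hr.le,
      mul_nonneg (mul_nonneg (mul_nonneg h0.le h0.le) hηs.1.le) hr.le,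
      mul_nonneg (mul_nonneg h0.le (sub_nonneg.mpr hηrs)) hr.le]
  linarith [hW1, hb1, hb2, hb3]

end WHyp

theorem stmt2 {X : Type*} [MetricSpace X] (H : WHyp X) (η : ℝ → ℝ → ℝ)
    (hU : H.UnifConvex η) (hmon : MonotoneModulus η) (r ε : ℝ) (a x y : X)
    (hr : 0 < r) (hε : ε ∈ Set.Ioc (0:ℝ) 2)
    (hxa : dist x a ≤ r) (hya : dist y a ≤ r) (hxy : ε * r ≤ dist x y) :
    ∀ l ∈ Set.Icc (0:ℝ) 1, ∀ s : ℝ, r ≤ s →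
      dist (H.W x y l) a ≤ (1 - 2 * l * (1 - l) * η s ε) * r := by
  intro l hl s hs
  rcases le_or_gt l (1/2) with h | h
  · exact H.aux hU hmon r ε a x y hr hε hxa hya hxy l ⟨hl.1, h⟩ s hs
  · rw [H.W3 x y l hl]
    have hxy' : ε * r ≤ dist y x := by rw [dist_comm]; exact hxy
    have := H.aux hU hmon r ε a y x hr hε hya hxa hxy' (1 - l)
      ⟨by linarith [hl.2], by linarith⟩ s hs
    calc dist (H.W y x (1 - l)) a ≤ (1 - 2 * (1 - l) * (1 - (1 - l)) * η s ε) * r := this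
      _ = (1 - 2 * l * (1 - l) * η s ε) * r := by ring
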